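/- Let φ : Ω → L(E) be strongly continuous and unbounded (sup_{x∈Ω}‖φ(x)‖ = ∞), with Ω locally compact Hausdorff such that for each x ∈ Ω there is f ∈ C_0(Ω) with ‖f‖ = 1 = f(x). Then the multiplication semigroup (T_φ(t))_{t≥0} on C_0(Ω, E) (assumed to consist of bounded operators) is not uniformly continuous: there exist δ > 0 and a sequence t_n ↓ 0 with ‖I − T_φ(t_n)‖ ≥ δ for all n. -/

import Mathlib

open ZeroAtInfty NormedSpace Filter Topology

open Nat in
lemma key_exp_lower {A : Type*} [NormedRing A] [NormedAlgebra ℝ A] [CompleteSpace A]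
    (a : A) (ha : ‖a‖ = 1) : 3 - Real.exp 1 ≤ ‖1 - exp a‖ := by
  have hsum : Summable fun n : ℕ => ((n ! : ℝ)⁻¹ : ℝ) • a ^ n := expSeries_summable' a
  have hsplit : exp a = 1 + a + ∑' n : ℕ, (((n + 2)! : ℝ)⁻¹ : ℝ) • a ^ (n + 2) := by
    have h2 : (∑ i ∈ Finset.range 2, ((i ! : ℝ)⁻¹ : ℝ) • a ^ i)
        + ∑' n : ℕ, (((n + 2)! : ℝ)⁻¹ : ℝ) • a ^ (n + 2)
        = ∑' n : ℕ, ((n ! : ℝ)⁻¹ : ℝ) • a ^ n := hsum.sum_add_tsum_nat_add 2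
    rw [exp_eq_tsum ℝ]
    show (∑' n : ℕ, ((n ! : ℝ)⁻¹ : ℝ) • a ^ n) = _
    rw [← h2]
    simp [Finset.sum_range_succ]
  set R := ∑' n : ℕ, (((n + 2)! : ℝ)⁻¹ : ℝ) • a ^ (n + 2) with hR
  have hnormR : ‖R‖ ≤ Real.exp 1 - 2 := by
    have hsum2 : Summable fun n : ℕ => ((n ! : ℝ)⁻¹ : ℝ) :=
      (Real.summable_pow_div_factorial 1).congr (by simp [one_div])
    have hsum3 : Summable fun n : ℕ => (((n + 2)! : ℝ)⁻¹ : ℝ) :=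
      (summable_nat_add_iff 2).2 hsum2
    have h1 : ‖R‖ ≤ ∑' n : ℕ, (((n + 2)! : ℝ)⁻¹ : ℝ) := by
      refine tsum_of_norm_bounded hsum3.hasSum fun n => ?_
      rw [norm_smul]
      have : ‖a ^ (n + 2)‖ ≤ 1 := by
        calc ‖a ^ (n + 2)‖ ≤ ‖a‖ ^ (n + 2) := norm_pow_le' a (by omega)
        _ = 1 := by rw [ha, one_pow]
      calc ‖(((n + 2)! : ℝ)⁻¹ : ℝ)‖ * ‖a ^ (n + 2)‖
          ≤ ‖(((n + 2)! : ℝ)⁻¹ : ℝ)‖ * 1 := by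
            exact mul_le_mul_of_nonneg_left this (norm_nonneg _)
        _ = (((n + 2)! : ℝ)⁻¹ : ℝ) := by
            rw [mul_one, Real.norm_eq_abs, abs_of_nonneg (by positivity)]
    have h2 : ∑' n : ℕ, (((n + 2)! : ℝ)⁻¹ : ℝ) = Real.exp 1 - 2 := by
      have he : Real.exp 1 = ∑' n : ℕ, ((n ! : ℝ)⁻¹ : ℝ) := by
        rw [Real.exp_eq_exp_ℝ, exp_eq_tsum ℝ]
        simp [smul_eq_mul]
      have h3 : (∑ i ∈ Finset.range 2, ((i ! : ℝ)⁻¹ : ℝ))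
          + ∑' n : ℕ, (((n + 2)! : ℝ)⁻¹ : ℝ) = ∑' n : ℕ, ((n ! : ℝ)⁻¹ : ℝ) :=
        hsum2.sum_add_tsum_nat_add 2
      rw [← he] at h3
      simp [Finset.sum_range_succ] at h3
      linarith
    linarith
  have : 1 - exp a = -(a + R) := by rw [hsplit]; abel
  rw [this, norm_neg]
  have h4 : ‖a‖ - ‖R‖ ≤ ‖a + R‖ := by
    have h0 : a = (a + R) + (-R) := by abel
    have h5 : ‖a‖ ≤ ‖a + R‖ + ‖R‖ := by
      calc ‖a‖ = ‖(a + R) + (-R)‖ := by rw [← h0]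
        _ ≤ ‖a + R‖ + ‖-R‖ := norm_add_le _ _
        _ = ‖a + R‖ + ‖R‖ := by rw [norm_neg]
    linarith
  rw [ha] at h4
  linarith

/-- If `φ : Ω → L(E)` is strongly continuous and unbounded, then the multiplication
semigroup `T_φ(t)s = e^{tφ(·)}s(·)` on `C₀(Ω, E)` is not uniformly continuous: there
are `δ > 0` and a sequence `tₙ ↓ 0` with `‖I − T_φ(tₙ)‖ ≥ δ` for all `n`. -/
theorem multiplication_semigroup_not_uniformly_continuous (Ω E : Type*)
    [TopologicalSpace Ω] [LocallyCompactSpace Ω] [T2Space Ω] [NormedAddCommGroup E]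
    [NormedSpace ℝ E] [CompleteSpace E] [Nontrivial E]
    (φ : Ω → (E →L[ℝ] E)) (hφ : ∀ z : E, Continuous fun x => φ x z)
    (hunbdd : ∀ C : ℝ, ∃ x, C ≤ ‖φ x‖)
    (hurysohn : ∀ x : Ω, ∃ f : C₀(Ω, ℝ), ‖f‖ = 1 ∧ f x = 1)
    (T : ℝ → C₀(Ω, E) →L[ℝ] C₀(Ω, E))
    (hT : ∀ t : ℝ, 0 ≤ t → ∀ s : C₀(Ω, E), ∀ x, T t s x = exp (t • φ x) (s x)) :
    ∃ δ > (0 : ℝ), ∃ t : ℕ → ℝ, (∀ n, 0 < t n) ∧ Tendsto t atTop (𝓝 0) ∧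
      ∀ n, δ ≤ ‖(1 : C₀(Ω, E) →L[ℝ] C₀(Ω, E)) - T (t n)‖ := by
  have hδ : (0 : ℝ) < 3 - Real.exp 1 := by
    have := Real.exp_one_lt_d9; linarith
  choose x hx using fun n : ℕ => hunbdd (n + 1)
  have hxpos : ∀ n, (0 : ℝ) < ‖φ (x n)‖ := fun n =>
    lt_of_lt_of_le (by positivity) (hx n)
  refine ⟨3 - Real.exp 1, hδ, fun n => ‖φ (x n)‖⁻¹, fun n => inv_pos.2 (hxpos n), ?_, ?_⟩
  · apply squeeze_zero (fun n => (inv_pos.2 (hxpos n)).le)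
      (g := fun n : ℕ => ((n : ℝ) + 1)⁻¹)
    · intro n
      exact inv_anti₀ (by positivity) (hx n)
    · exact tendsto_one_div_add_atTop_nhds_zero_nat.congr (by simp [one_div])
  · intro n
    show (3:ℝ) - Real.exp 1 ≤ ‖(1 : C₀(Ω, E) →L[ℝ] C₀(Ω, E)) - T (‖φ (x n)‖⁻¹)‖
    set tn : ℝ := ‖φ (x n)‖⁻¹ with htn
    have htnpos : 0 < tn := inv_pos.2 (hxpos n)
    set A : E →L[ℝ] E := tn • φ (x n) with hA
    have hAnorm : ‖A‖ = 1 := by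
      rw [hA]
      rw [norm_smul tn (φ (x n)), Real.norm_eq_abs, abs_of_pos htnpos, htn,
        inv_mul_cancel₀ (hxpos n).ne']
    refine le_trans (key_exp_lower A hAnorm) ?_
    refine ContinuousLinearMap.opNorm_le_bound _ (norm_nonneg ((1 : C₀(Ω, E) →L[ℝ] C₀(Ω, E)) - T tn)) fun z => ?_
    obtain ⟨f, hf1, hfx⟩ := hurysohn (x n)
    set s : C₀(Ω, E) :=
      { toFun := fun y => f y • z
        continuous_toFun := (map_continuous f).smul continuous_const
        zero_at_infty' := by
          have := (zero_at_infty f).smul_const z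
          simpa using this } with hs
    have hsnorm : ‖s‖ ≤ ‖z‖ := by
      rw [← ZeroAtInftyContinuousMap.norm_toBCF_eq_norm]
      refine BoundedContinuousFunction.norm_le (norm_nonneg z) |>.2 fun y => ?_
      show ‖f y • z‖ ≤ ‖z‖
      rw [norm_smul]
      calc ‖f y‖ * ‖z‖ ≤ ‖f‖ * ‖z‖ := by
            refine mul_le_mul_of_nonneg_right ?_ (norm_nonneg z)
            rw [← ZeroAtInftyContinuousMap.norm_toBCF_eq_norm]
            exact BoundedContinuousFunction.norm_coe_le_norm f.toBCF y
        _ = ‖z‖ := by rw [hf1, one_mul]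
    have hsx : s (x n) = z := by simp [hs, hfx]
    have heval : ((1 - T tn) s) (x n) = z - exp A (s (x n)) := by
      rw [ContinuousLinearMap.sub_apply, ContinuousLinearMap.one_apply]
      rw [ZeroAtInftyContinuousMap.sub_apply]
      rw [hT tn htnpos.le s (x n), hsx, hA]
    have h1 : ‖((1 : E →L[ℝ] E) - exp A) z‖ = ‖((1 - T tn) s) (x n)‖ := by
      rw [heval, hsx, ContinuousLinearMap.sub_apply, ContinuousLinearMap.one_apply]
    rw [h1]
    calc ‖((1 - T tn) s) (x n)‖ ≤ ‖(1 - T tn) s‖ := by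
          rw [← ZeroAtInftyContinuousMap.norm_toBCF_eq_norm]
          exact BoundedContinuousFunction.norm_coe_le_norm ((1 - T tn) s).toBCF (x n)
      _ ≤ ‖(1 : C₀(Ω, E) →L[ℝ] C₀(Ω, E)) - T tn‖ * ‖s‖ :=
          ContinuousLinearMap.le_opNorm _ s
      _ ≤ ‖(1 : C₀(Ω, E) →L[ℝ] C₀(Ω, E)) - T tn‖ * ‖z‖ :=
          mul_le_mul_of_nonneg_left hsnorm (norm_nonneg ((1 : C₀(Ω, E) →L[ℝ] C₀(Ω, E)) - T tn))
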